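/- If c_i > c'_i at some position i for two configurations c, c' with f_Y(c) = f_Y(c'), then c_{i−2} > c'_{i−2} and c_{i−2} = c_i − 1; consequently any two distinct configurations with the same image under f_Y differ at infinitely many positions and take infinitely many different values at those positions. -/

import Mathlib

/-- The extended integers `ℤ ∪ {-∞, +∞}`. -/
abbrev EZ : Type := WithBot (WithTop ℤ)

/-- Embedding of `ℤ` into the extended integers. -/
def finVal (n : ℤ) : EZ := ((n : WithTop ℤ) : EZ)

/-- The integer value of a finite extended integer (`0` on `±∞`). -/
def valZ (x : EZ) : ℤ := WithBot.recBotCoe 0 (fun y => WithTop.recTopCoe 0 id y) x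

/-- The measuring device `β_l^m`. -/
noncomputable def beta (l : ℕ) (m : ℤ) (n : EZ) : EZ :=
  if finVal (m + (l : ℤ)) < n then ⊤
  else if n < finVal (m - (l : ℤ)) then ⊥
  else WithBot.map (WithTop.map (fun k => k - m)) n

/-- Reference height: the value of `x` if finite, `0` if `x = ±∞`. -/
def refH (x : EZ) : ℤ := if x = ⊥ ∨ x = ⊤ then 0 else valZ x

/-- One-dimensional sandpile configurations. -/
abbrev Config : Type := ℤ → EZ

/-- The neighborhood sequence `d_r^i(c)`: the `2r`-tuple of measured differences. -/
noncomputable def nbhd (r : ℕ) (c : Config) (i : ℤ) : Fin (2 * r) → EZ :=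
  fun j => beta r (refH (c i))
    (c (i + (if (j : ℕ) < r then ((j : ℕ) : ℤ) - (r : ℤ) else ((j : ℕ) : ℤ) - (r : ℤ) + 1)))

/-- The global function of the sand automaton of radius `r` with local rule `lam`. -/
noncomputable def globalF (r : ℕ) (lam : (Fin (2 * r) → EZ) → ℤ) (c : Config) : Config :=
  fun i => if c i = ⊥ ∨ c i = ⊤ then c i
    else finVal (valZ (c i) + lam (nbhd r c i))

/-- Finite configurations. -/
def FiniteConf (c : Config) : Prop := ∃ k : ℕ, ∀ i : ℤ, (k : ℤ) ≤ |i| → c i = finVal 0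

/-- Periodic configurations. -/
def PeriodicConf (c : Config) : Prop := ∃ p : ℤ, p ≠ 0 ∧ ∀ i : ℤ, c (i + p) = c i


/-- The local rule of the sand automaton `Y` (radius 2, arguments `(a,b,x,y)`):
returns `-1` on `(+∞,-,-,-)`, `(2,-,-,-)`, `(1,-,-,-)`, `(0,-,-,-)`, `(-1,-∞,-,-)`,
and `0` otherwise. -/
def lamY (v : Fin 4 → EZ) : ℤ :=
  if v 0 = ⊤ ∨ v 0 = finVal 2 ∨ v 0 = finVal 1 ∨ v 0 = finVal 0 then -1
  else if v 0 = finVal (-1) ∧ v 1 = ⊥ then -1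
  else 0

@[simp] lemma finVal_ne_top (n : ℤ) : finVal n ≠ ⊤ := by simp [finVal]
@[simp] lemma finVal_ne_bot (n : ℤ) : finVal n ≠ ⊥ := by simp [finVal]
@[simp] lemma finVal_inj {m n : ℤ} : finVal m = finVal n ↔ m = n := by simp [finVal]
@[simp] lemma finVal_lt_iff {m n : ℤ} : finVal m < finVal n ↔ m < n := by
  simp [finVal, WithBot.coe_lt_coe, WithTop.coe_lt_coe]
@[simp] lemma valZ_finVal (n : ℤ) : valZ (finVal n) = n := by simp [valZ, finVal]
@[simp] lemma refH_finVal (n : ℤ) : refH (finVal n) = n := by simp [refH]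


lemma map_finVal (m n : ℤ) :
    WithBot.map (WithTop.map (fun k => k - m)) (finVal n) = finVal (n - m) := by
  simp [finVal]

lemma beta_eval (m n : ℤ) : beta 2 m (finVal n) =
    if m + 2 < n then ⊤ else if n < m - 2 then ⊥ else finVal (n - m) := by
  simp only [beta, map_finVal, finVal_lt_iff, Nat.cast_ofNat]

lemma beta_eq_top_iff {m n : ℤ} : beta 2 m (finVal n) = ⊤ ↔ m + 2 < n := by
  rw [beta_eval]; split_ifs with h1 h2
  · exact iff_of_true rfl h1
  · exact iff_of_false (by simp) h1
  · exact iff_of_false (by simp) h1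

lemma beta_eq_bot_iff {m n : ℤ} : beta 2 m (finVal n) = ⊥ ↔ n < m - 2 := by
  rw [beta_eval]; split_ifs with h1 h2
  · exact iff_of_false (by simp) (by omega)
  · exact iff_of_true rfl h2
  · exact iff_of_false (by simp) h2

lemma beta_eq_finVal_iff {m n k : ℤ} (hk1 : -2 ≤ k) (hk2 : k ≤ 2) :
    beta 2 m (finVal n) = finVal k ↔ n = m + k := by
  rw [beta_eval]; split_ifs with h1 h2
  · exact iff_of_false (by simp [eq_comm]) (by omega)
  · exact iff_of_false (by simp [eq_comm]) (by omega)
  · rw [finVal_inj]; omega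

lemma nbhd_zero (c : Config) (i : ℤ) :
    nbhd 2 c i 0 = beta 2 (refH (c i)) (c (i - 2)) := by
  simp only [nbhd]
  norm_num
  rw [show i + -2 = i - 2 by ring]

lemma nbhd_one (c : Config) (i : ℤ) :
    nbhd 2 c i 1 = beta 2 (refH (c i)) (c (i - 1)) := by
  simp only [nbhd]
  norm_num
  rw [show i + -1 = i - 1 by ring]

lemma delta_eq (c : Config) (hc : ∀ i : ℤ, ∃ n : ℤ, c i = finVal n) (i : ℤ) :
    lamY (nbhd 2 c i) =
      if valZ (c i) ≤ valZ (c (i-2)) ∨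
         (valZ (c (i-2)) = valZ (c i) - 1 ∧ valZ (c (i-1)) < valZ (c i) - 2)
      then -1 else 0 := by
  obtain ⟨m, hm⟩ := hc i
  obtain ⟨a, ha⟩ := hc (i-2)
  obtain ⟨b, hb⟩ := hc (i-1)
  rw [hm, ha, hb, valZ_finVal, valZ_finVal, valZ_finVal]
  have h0 : nbhd 2 c i 0 = beta 2 m (finVal a) := by
    rw [nbhd_zero, hm, ha, refH_finVal]
  have h1 : nbhd 2 c i 1 = beta 2 m (finVal b) := by
    rw [nbhd_one, hm, hb, refH_finVal]
  have hc0 : (nbhd 2 c i 0 = ⊤ ∨ nbhd 2 c i 0 = finVal 2 ∨ nbhd 2 c i 0 = finVal 1 ∨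
      nbhd 2 c i 0 = finVal 0) ↔ m ≤ a := by
    rw [h0, beta_eq_top_iff, beta_eq_finVal_iff (by norm_num) (by norm_num),
      beta_eq_finVal_iff (by norm_num) (by norm_num),
      beta_eq_finVal_iff (by norm_num) (by norm_num)]
    omega
  have hc1 : (nbhd 2 c i 0 = finVal (-1) ∧ nbhd 2 c i 1 = ⊥) ↔ (a = m - 1 ∧ b < m - 2) := by
    rw [h0, h1, beta_eq_finVal_iff (by norm_num) (by norm_num), beta_eq_bot_iff]
    omega
  rw [lamY, if_congr hc0 rfl rfl, if_congr hc1 rfl rfl]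
  split_ifs with g1 g2 g3 g3 <;> first | rfl | omega

lemma key_eq (c c' : Config)
    (hfin : ∀ i : ℤ, ∃ n : ℤ, c i = finVal n)
    (hfin' : ∀ i : ℤ, ∃ n : ℤ, c' i = finVal n)
    (himg : globalF 2 lamY c = globalF 2 lamY c') (i : ℤ) :
    valZ (c i) + lamY (nbhd 2 c i) = valZ (c' i) + lamY (nbhd 2 c' i) := by
  have h := congrFun himg i
  obtain ⟨m, hm⟩ := hfin i
  obtain ⟨m', hm'⟩ := hfin' i
  rw [globalF, globalF] at h
  rw [hm, hm'] at h ⊢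
  simp only [finVal_ne_bot, finVal_ne_top, or_self, if_false, finVal_inj] at h
  exact h

lemma stepB (c c' : Config)
    (hfin : ∀ i : ℤ, ∃ n : ℤ, c i = finVal n)
    (hfin' : ∀ i : ℤ, ∃ n : ℤ, c' i = finVal n)
    (himg : globalF 2 lamY c = globalF 2 lamY c') (i : ℤ)
    (h : valZ (c' i) < valZ (c i)) :
    valZ (c i) = valZ (c' i) + 1 ∧ valZ (c i) - 1 ≤ valZ (c (i-2)) ∧
      valZ (c' (i-2)) ≤ valZ (c' i) - 1 := by
  have e := key_eq c c' hfin hfin' himg i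
  rw [delta_eq c hfin i, delta_eq c' hfin' i] at e
  split_ifs at e with g1 g2 g2 <;> omega

lemma mainZ (c c' : Config)
    (hfin : ∀ i : ℤ, ∃ n : ℤ, c i = finVal n)
    (hfin' : ∀ i : ℤ, ∃ n : ℤ, c' i = finVal n)
    (himg : globalF 2 lamY c = globalF 2 lamY c') (i : ℤ)
    (h : valZ (c' i) < valZ (c i)) :
    valZ (c' (i-2)) < valZ (c (i-2)) ∧ valZ (c (i-2)) = valZ (c i) - 1 ∧
      valZ (c (i-2)) = valZ (c' (i-2)) + 1 := by
  obtain ⟨h1, h2, h3⟩ := stepB c c' hfin hfin' himg i h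
  have h5 : valZ (c' (i-2)) < valZ (c (i-2)) := by omega
  obtain ⟨h6, -, -⟩ := stepB c c' hfin hfin' himg (i-2) h5
  exact ⟨h5, by omega, h6⟩

lemma chain (c c' : Config)
    (hfin : ∀ i : ℤ, ∃ n : ℤ, c i = finVal n)
    (hfin' : ∀ i : ℤ, ∃ n : ℤ, c' i = finVal n)
    (himg : globalF 2 lamY c = globalF 2 lamY c') (i0 : ℤ)
    (h : valZ (c' i0) < valZ (c i0)) (k : ℕ) :
    valZ (c (i0 - 2*k)) = valZ (c i0) - k ∧
      valZ (c' (i0 - 2*k)) = valZ (c i0) - k - 1 := by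
  induction k with
  | zero =>
    have := (stepB c c' hfin hfin' himg i0 h).1
    simp; omega
  | succ n ih =>
    have hlt : valZ (c' (i0 - 2*n)) < valZ (c (i0 - 2*n)) := by omega
    have hm := mainZ c c' hfin hfin' himg (i0 - 2*n) hlt
    have hre : i0 - 2*((n:ℤ)+1) = (i0 - 2*n) - 2 := by ring
    push_cast
    rw [hre]
    push_cast at ih
    omega

lemma finVal_valZ {c : Config} (hc : ∀ i : ℤ, ∃ n : ℤ, c i = finVal n) (i : ℤ) :
    c i = finVal (valZ (c i)) := by
  obtain ⟨n, hn⟩ := hc i; rw [hn, valZ_finVal]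

lemma part2 (c c' : Config)
    (hfin : ∀ i : ℤ, ∃ n : ℤ, c i = finVal n)
    (hfin' : ∀ i : ℤ, ∃ n : ℤ, c' i = finVal n)
    (himg : globalF 2 lamY c = globalF 2 lamY c') (i0 : ℤ)
    (h : valZ (c' i0) < valZ (c i0)) :
    {i : ℤ | c i ≠ c' i}.Infinite ∧ (c '' {i : ℤ | c i ≠ c' i}).Infinite ∧
      (c' '' {i : ℤ | c i ≠ c' i}).Infinite := by
  have hch := chain c c' hfin hfin' himg i0 h
  have hmem : ∀ k : ℕ, (i0 - 2*(k:ℤ)) ∈ {i : ℤ | c i ≠ c' i} := by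
    intro k
    obtain ⟨h1, h2⟩ := hch k
    intro hco
    have := congrArg valZ hco
    omega
  refine ⟨Set.infinite_of_injective_forall_mem (f := fun k : ℕ => i0 - 2*(k:ℤ))
      (fun a b hab => by simp at hab; omega) hmem, ?_, ?_⟩
  · refine Set.infinite_of_injective_forall_mem
      (f := fun k : ℕ => finVal (valZ (c i0) - (k:ℤ))) (fun a b hab => ?_) (fun k => ?_)
    · simp only [finVal_inj] at hab; omega
    · exact ⟨i0 - 2*(k:ℤ), hmem k, by rw [finVal_valZ hfin, (hch k).1]⟩
  · refine Set.infinite_of_injective_forall_mem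
      (f := fun k : ℕ => finVal (valZ (c i0) - (k:ℤ) - 1)) (fun a b hab => ?_) (fun k => ?_)
    · simp only [finVal_inj] at hab; omega
    · exact ⟨i0 - 2*(k:ℤ), hmem k, by rw [finVal_valZ hfin', (hch k).2]⟩

/-- If `c` and `c'` are configurations with only finite (integer) values and
`f_Y(c) = f_Y(c')`, then whenever `c_i > c'_i` one has `c_{i-2} > c'_{i-2}` and
`c_{i-2} = c_i - 1`; consequently, if `c ≠ c'` then `c` and `c'` differ at infinitely
many positions, and `c` takes infinitely many different values at those positions. -/
theorem Y_difference_propagation (c c' : Config)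
    (hfin : ∀ i : ℤ, ∃ n : ℤ, c i = finVal n)
    (hfin' : ∀ i : ℤ, ∃ n : ℤ, c' i = finVal n)
    (himg : globalF 2 lamY c = globalF 2 lamY c') :
    (∀ i : ℤ, c' i < c i →
      c' (i - 2) < c (i - 2) ∧ c (i - 2) = finVal (valZ (c i) - 1)) ∧
    (c ≠ c' →
      {i : ℤ | c i ≠ c' i}.Infinite ∧ (c '' {i : ℤ | c i ≠ c' i}).Infinite) := by
  constructor
  · intro i hi
    have hi' : valZ (c' i) < valZ (c i) := by
      rw [finVal_valZ hfin i, finVal_valZ hfin' i, finVal_lt_iff] at hi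
      exact hi
    obtain ⟨h1, h2, h3⟩ := mainZ c c' hfin hfin' himg i hi'
    constructor
    · rw [finVal_valZ hfin (i-2), finVal_valZ hfin' (i-2), finVal_lt_iff]
      exact h1
    · rw [finVal_valZ hfin (i-2), h2]
  · intro hne
    obtain ⟨i0, hi0⟩ := Function.ne_iff.mp hne
    have hvne : valZ (c i0) ≠ valZ (c' i0) := by
      intro hv
      apply hi0
      rw [finVal_valZ hfin i0, finVal_valZ hfin' i0, hv]
    rcases lt_or_gt_of_ne hvne with hlt | hgt
    · obtain ⟨hs, -, hi2⟩ := part2 c' c hfin' hfin himg.symm i0 hlt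
      have hset : {i : ℤ | c' i ≠ c i} = {i : ℤ | c i ≠ c' i} := by
        ext j; exact ne_comm
      rw [hset] at hs hi2
      exact ⟨hs, hi2⟩
    · obtain ⟨hs, hi1, -⟩ := part2 c c' hfin hfin' himg i0 hgt
      exact ⟨hs, hi1⟩
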